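/- Let d ≥ 2, n ≥ 1 and 1 ≤ m ≤ n be integers, and let a₁, …, a_m be vectors in (Z_d)ⁿ that are linearly independent, i.e., the only coefficients x₁, …, x_m ∈ Z_d with x₁a₁ + ⋯ + x_m a_m = 0 are x₁ = ⋯ = x_m = 0. Then there exists an invertible n×n matrix over Z_d whose first m columns are a₁, …, a_m; in particular the family a₁, …, a_m extends to a family of n linearly independent vectors in (Z_d)ⁿ. -/

import Mathlib

theorem stmt_17 (d n m : ℕ) (hd : 2 ≤ d) (hn : 1 ≤ n) (hm : 1 ≤ m) (hmn : m ≤ n)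
    (a : Fin m → (Fin n → ZMod d))
    (hLI : ∀ x : Fin m → ZMod d, ∑ i, x i • a i = 0 → ∀ i, x i = 0) :
    (∃ B : Matrix (Fin n) (Fin n) (ZMod d), IsUnit B ∧
      ∀ i : Fin m, (fun r => B r (Fin.castLE hmn i)) = a i) ∧
    ∃ b : Fin n → (Fin n → ZMod d),
      (∀ i : Fin m, b (Fin.castLE hmn i) = a i) ∧
      (∀ x : Fin n → ZMod d, ∑ i, x i • b i = 0 → ∀ i, x i = 0) := by
  classical
  haveI : NeZero d := ⟨by omega⟩
  -- integer lifts of the `a i`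
  set v : Fin m → (Fin n → ℤ) := fun i r => ((a i r).val : ℤ) with hv
  have hcastv : ∀ (i : Fin m) (r : Fin n), ((v i r : ℤ) : ZMod d) = a i r := by
    intro i r
    simp [hv, ZMod.natCast_val, ZMod.intCast_cast, ZMod.cast_id]
  -- any integer relation mod d has all coefficients divisible by d
  have hstep : ∀ c : Fin m → ℤ, (∑ j, c j • v j) = 0 → ∀ j, (d : ℤ) ∣ c j := by
    intro c hc j
    have h0 : ∀ r, (∑ j, c j * v j r) = 0 := by
      intro r
      have := congrFun hc r
      simpa [Finset.sum_apply, smul_eq_mul] using this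
    have hz : ∑ j, ((c j : ZMod d)) • a j = 0 := by
      funext r
      have h1 := congrArg (fun z : ℤ => (z : ZMod d)) (h0 r)
      push_cast at h1
      simp only [hcastv] at h1
      simpa [Finset.sum_apply, smul_eq_mul] using h1
    exact (ZMod.intCast_zmod_eq_zero_iff_dvd _ _).mp (hLI _ hz j)
  -- the integer lifts are linearly independent over ℤ
  have hLIv : LinearIndependent ℤ v := by
    rw [Fintype.linearIndependent_iff]
    intro c hc
    have hpow : ∀ k : ℕ, ∀ j, ((d : ℤ) ^ k) ∣ c j := by
      intro k
      induction k with
      | zero => simp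
      | succ k ih =>
        have he : ∀ j, c j = (d : ℤ) ^ k * (c j / (d : ℤ) ^ k) :=
          fun j => (Int.mul_ediv_cancel' (ih j)).symm
        set e : Fin m → ℤ := fun j => c j / (d : ℤ) ^ k with hedef
        have hsum : ((d : ℤ) ^ k) • ∑ j, e j • v j = 0 := by
          rw [Finset.smul_sum]
          have : ∀ j ∈ Finset.univ, ((d : ℤ) ^ k) • (e j • v j) = c j • v j := by
            intro j _
            rw [smul_smul, ← he j]
          rw [Finset.sum_congr rfl this, hc]
        have hdk : ((d : ℤ) ^ k) ≠ 0 := by positivity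
        have hz : ∑ j, e j • v j = 0 := by
          rcases smul_eq_zero.mp hsum with h | h
          · exact absurd h hdk
          · exact h
        intro j
        have hdj := hstep e hz j
        rw [he j, pow_succ]
        exact mul_dvd_mul_left _ hdj
    intro j
    refine Int.eq_zero_of_abs_lt_dvd (hpow ((c j).natAbs + 1) j) ?_
    have h1 : (c j).natAbs < d ^ ((c j).natAbs + 1) :=
      lt_trans (Nat.lt_succ_self _) (Nat.lt_pow_self hd)
    rw [Int.abs_eq_natAbs]
    exact_mod_cast h1
  -- span and Smith normal form
  set N : Submodule ℤ (Fin n → ℤ) := Submodule.span ℤ (Set.range v) with hN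
  have hvN : ∀ j, v j ∈ N := fun j => Submodule.subset_span ⟨j, rfl⟩
  have bV : Module.Basis (Fin m) ℤ N := Module.Basis.span hLIv
  obtain ⟨m', S⟩ := Submodule.smithNormalForm (Pi.basisFun ℤ (Fin n)) N
  have hm' : m' = m := by
    have h1 := Module.finrank_eq_card_basis S.bN
    have h2 := Module.finrank_eq_card_basis bV
    simp only [Fintype.card_fin] at h1 h2
    omega
  have hm'' : m = m' := hm'.symm
  subst hm''
  -- the complement of the range of S.f has cardinality n - m
  have hcardC : Fintype.card {k : Fin n // k ∉ Set.range S.f} = n - m := by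
    rw [Fintype.card_subtype_compl]
    have hr : Fintype.card {k : Fin n // k ∈ Set.range S.f} = m := by
      rw [Fintype.card_congr (Equiv.ofInjective S.f S.f.injective).symm, Fintype.card_fin]
    rw [hr, Fintype.card_fin]
  have hcardT : Fintype.card {j : Fin n // ¬ ((j : ℕ) < m)} = n - m := by
    rw [Fintype.card_subtype_compl]
    have e : {j : Fin n // ((j : ℕ) < m)} ≃ Fin m :=
      { toFun := fun j => ⟨j.1.1, j.2⟩
        invFun := fun i => ⟨⟨i.1, lt_of_lt_of_le i.2 hmn⟩, i.2⟩
        left_inv := fun j => by ext; rfl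
        right_inv := fun i => by ext; rfl }
    rw [Fintype.card_congr e, Fintype.card_fin, Fintype.card_fin]
  have q : {j : Fin n // ¬ ((j : ℕ) < m)} ≃ {k : Fin n // k ∉ Set.range S.f} :=
    Fintype.equivOfCardEq (by rw [hcardT, hcardC])
  set c0 : {j : Fin n // ¬ ((j : ℕ) < m)} → Fin n := fun t => (q t).1 with hc0
  have hc0notin : ∀ t, c0 t ∉ Set.range S.f := fun t => (q t).2
  have hc0inj : Function.Injective c0 := by
    intro t t' h
    exact q.injective (Subtype.ext h)
  -- the integer columns and their reductions
  set vt : Fin n → (Fin n → ℤ) :=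
    fun j => if h : (j : ℕ) < m then v ⟨j.1, h⟩ else S.bM (c0 ⟨j, h⟩) with hvt
  set w : Fin n → (Fin n → ZMod d) := fun j r => ((vt j r : ℤ) : ZMod d) with hw
  have hwa : ∀ i : Fin m, w (Fin.castLE hmn i) = a i := by
    intro i
    funext r
    have hlt : ((Fin.castLE hmn i : Fin n) : ℕ) < m := by simpa using i.2
    have hi : (⟨(Fin.castLE hmn i : Fin n).1, hlt⟩ : Fin m) = i := by ext; simp
    simp only [hw, hvt, dif_pos hlt, hi, hcastv]
  -- the n columns are linearly independent over ZMod d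
  have hwLI : ∀ x : Fin n → ZMod d, ∑ j, x j • w j = 0 → ∀ j, x j = 0 := by
    intro x hx
    set xt : Fin n → ℤ := fun j => ((x j).val : ℤ) with hxt
    have hxcast : ∀ j, ((xt j : ℤ) : ZMod d) = x j := by
      intro j
      simp [hxt, ZMod.natCast_val, ZMod.intCast_cast, ZMod.cast_id]
    set u : Fin n → ℤ := ∑ j, xt j • vt j with hu
    have hdvdu : ∀ r, (d : ℤ) ∣ u r := by
      intro r
      rw [← ZMod.intCast_zmod_eq_zero_iff_dvd]
      have hxr := congrFun hx r
      simp only [Finset.sum_apply, Pi.smul_apply, smul_eq_mul] at hxr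
      have hur : u r = ∑ j, xt j * vt j r := by
        simp [hu, Finset.sum_apply, smul_eq_mul]
      rw [hur]
      push_cast
      simp only [hxcast]
      simpa [hw] using hxr
    have hrepr : ∀ k, (d : ℤ) ∣ S.bM.repr u k := by
      intro k
      have hudec : u = (d : ℤ) • fun r => u r / d := by
        funext r
        simp only [Pi.smul_apply, smul_eq_mul]
        exact (Int.mul_ediv_cancel' (hdvdu r)).symm
      rw [hudec, map_smul, Finsupp.smul_apply, smul_eq_mul]
      exact dvd_mul_right _ _
    have hcoord : ∀ t : {j : Fin n // ¬ ((j : ℕ) < m)}, S.bM.repr u (c0 t) = xt t.1 := by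
      intro t
      have hrr : S.bM.repr u = ∑ j, xt j • S.bM.repr (vt j) := by
        rw [hu, map_sum]
        exact Finset.sum_congr rfl fun j _ => map_smul _ _ _
      rw [hrr, Finset.sum_apply']
      have hterm : ∀ j : Fin n,
          (xt j • S.bM.repr (vt j)) (c0 t) = if j = t.1 then xt t.1 else 0 := by
        intro j
        rw [Finsupp.smul_apply, smul_eq_mul]
        by_cases h : (j : ℕ) < m
        · have hz : S.bM.repr (vt j) (c0 t) = 0 := by
            have := S.repr_eq_zero_of_notMem_range (⟨v ⟨j.1, h⟩, hvN _⟩ : N) (hc0notin t)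
            simpa [hvt, dif_pos h] using this
          have hne : j ≠ t.1 := by
            intro hj
            exact t.2 (by rw [← hj]; exact h)
          rw [hz, mul_zero, if_neg hne]
        · simp only [hvt, dif_neg h, Module.Basis.repr_self]
          rw [Finsupp.single_apply]
          by_cases hj : j = t.1
          · have hjt : (⟨j, h⟩ : {j : Fin n // ¬ ((j : ℕ) < m)}) = t := Subtype.ext hj
            simp [hjt, hj]
          · have hcc : c0 ⟨j, h⟩ ≠ c0 t := by
              intro hcne
              exact hj (congrArg Subtype.val (hc0inj hcne))
            simp [hcc, hj]
      rw [Finset.sum_congr rfl (fun j _ => hterm j)]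
      simp
    have hxhigh : ∀ j : Fin n, ¬ ((j : ℕ) < m) → x j = 0 := by
      intro j h
      have hdx : (d : ℤ) ∣ xt j := by
        have := hrepr (c0 ⟨j, h⟩)
        rwa [hcoord ⟨j, h⟩] at this
      have := (ZMod.intCast_zmod_eq_zero_iff_dvd _ _).mpr hdx
      rwa [hxcast j] at this
    have hxlow : ∀ i : Fin m, x (Fin.castLE hmn i) = 0 := by
      apply hLI
      have hsub : ∑ j ∈ Finset.univ.map (Fin.castLEEmb hmn), x j • w j = ∑ j, x j • w j := by
        apply Finset.sum_subset (Finset.subset_univ _)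
        intro j _ hj
        have hnotlt : ¬ ((j : ℕ) < m) := by
          intro h
          exact hj (Finset.mem_map.mpr ⟨⟨j.1, h⟩, Finset.mem_univ _, by ext; simp⟩)
        rw [hxhigh j hnotlt, zero_smul]
      rw [Finset.sum_map] at hsub
      have heq : ∑ i, x (Fin.castLE hmn i) • a i = ∑ j, x j • w j := by
        rw [← hsub]
        refine Finset.sum_congr rfl fun i _ => ?_
        rw [Fin.castLEEmb_apply, hwa i]
      rw [heq, hx]
    intro j
    by_cases h : (j : ℕ) < m
    · have hj : j = Fin.castLE hmn ⟨j.1, h⟩ := by ext; simp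
      rw [hj]
      exact hxlow _
    · exact hxhigh j h
  -- assemble the two conclusions
  constructor
  · set B : Matrix (Fin n) (Fin n) (ZMod d) := Matrix.of fun r j => w j r with hB
    refine ⟨B, ?_, fun i => funext fun r => congrFun (hwa i) r⟩
    have hker : ∀ x : Fin n → ZMod d, B.mulVec x = 0 → x = 0 := by
      intro x hxx
      have hs : ∑ j, x j • w j = 0 := by
        funext r
        have := congrFun hxx r
        simpa [hB, Matrix.mulVec, dotProduct, Finset.sum_apply, smul_eq_mul,
          mul_comm] using this
      funext j
      exact hwLI x hs j
    have hinj : Function.Injective (Matrix.toLin' B) := by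
      intro x y hxy
      have h0 : B.mulVec (x - y) = 0 := by
        have : Matrix.toLin' B (x - y) = 0 := by
          rw [map_sub, hxy, sub_self]
        simpa [Matrix.toLin'_apply] using this
      have := hker _ h0
      exact sub_eq_zero.mp this
    have hbij : Function.Bijective (Matrix.toLin' B) :=
      ⟨hinj, Finite.injective_iff_surjective.mp hinj⟩
    have hU : IsUnit (Matrix.toLinAlgEquiv' B) := by
      rw [Module.End.isUnit_iff]
      exact hbij
    have := hU.map (Matrix.toLinAlgEquiv'.symm : _ ≃ₐ[ZMod d] _)
    simpa using this
  · exact ⟨w, hwa, hwLI⟩
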